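/- Let G = (V,E) be a finite directed graph, P = {V_1,...,V_K} a partition of V, and a : V → ℝ a scalar attribute. For each k let μ_B^(k) and μ_I^(k) be the means of a over Bdy(V_k) and Int(V_k) respectively. For each k set E_k = E_{B→I} ∩ (V_k × V_k), m_k = |E_k|, M = |E_{B→I}|, π_k = m_k/M, and let X̄_k, Ȳ_k be the means of a(u) and a(v) over (u,v) ∈ E_k, and X̄, Ȳ the corresponding means over all of E_{B→I}. Assume: (i) for every k with nonempty interior and boundary, μ_B^(k) > μ_I^(k); (ii) for every k with E_k ≠ ∅, X̄_k ≥ μ_B^(k) and Ȳ_k ≤ μ_I^(k); (iii) the variances of the samples (a(u))_{(u,v)∈E_{B→I}} and (a(v))_{(u,v)∈E_{B→I}} are strictly positive; (iv) for every k with E_k ≠ ∅, the empirical covariance Cov_k = (1/m_k)Σ_{(u,v)∈E_k}(a(u)−X̄_k)(a(v)−Ȳ_k) is ≤ 0; (v) Σ_k π_k(X̄_k−X̄)(Ȳ_k−Ȳ) ≤ 0; and at least one of the inequalities in (iv) or (v) is strict. Then the Pearson correlation r_{B→I}(a) of the pairs (a(u),a(v)) over (u,v) ∈ E_{B→I} is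 strictly negative. -/

import Mathlib

open Finset
open scoped Classical

/-- A node `v` is interior (relative to the block assignment `P` and arc set `Ed`)
if all of its in- and out-neighbours lie in its own block. -/
def IsInterior {V K : Type*} (Ed : Finset (V × V)) (P : V → K) (v : V) : Prop :=
  ∀ u, ((u, v) ∈ Ed ∨ (v, u) ∈ Ed) → P u = P v

/-- Interior nodes of the block `k`. -/
noncomputable def IntS {V K : Type*} [Fintype V] (Ed : Finset (V × V)) (P : V → K)
    (k : K) : Finset V :=
  Finset.univ.filter (fun v => P v = k ∧ IsInterior Ed P v)

/-- Boundary nodes of the block `k`. -/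
noncomputable def BdyS {V K : Type*} [Fintype V] (Ed : Finset (V × V)) (P : V → K)
    (k : K) : Finset V :=
  Finset.univ.filter (fun v => P v = k ∧ ¬ IsInterior Ed P v)

/-- Arcs with boundary tail and interior head (necessarily in the same block). -/
noncomputable def EBI {V K : Type*} (Ed : Finset (V × V)) (P : V → K) : Finset (V × V) :=
  Ed.filter (fun e => P e.1 = P e.2 ∧ ¬ IsInterior Ed P e.1 ∧ IsInterior Ed P e.2)

/-- The boundary-to-interior arcs within the block `k`. -/
noncomputable def EBIk {V K : Type*} (Ed : Finset (V × V)) (P : V → K) (k : K) :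
    Finset (V × V) :=
  (EBI Ed P).filter (fun e => P e.1 = k)

/-- Mean of an attribute over a finite set of nodes. -/
noncomputable def nodeMean {V : Type*} (s : Finset V) (a : V → ℝ) : ℝ :=
  (∑ v ∈ s, a v) / s.card

/-- Mean of `f` over a finite set of arcs. -/
noncomputable def pairMean {V : Type*} (s : Finset (V × V)) (f : V × V → ℝ) : ℝ :=
  (∑ e ∈ s, f e) / s.card

/-- Empirical covariance of `f` and `g` over a finite set of arcs. -/
noncomputable def pairCov {V : Type*} (s : Finset (V × V)) (f g : V × V → ℝ) : ℝ :=
  (∑ e ∈ s, (f e - pairMean s f) * (g e - pairMean s g)) / s.card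

/-- Pearson correlation of `f` and `g` over a finite set of arcs. -/
noncomputable def pairCorr {V : Type*} (s : Finset (V × V)) (f g : V × V → ℝ) : ℝ :=
  pairCov s f g / (Real.sqrt (pairCov s f f) * Real.sqrt (pairCov s g g))

lemma sum_eq_card_mul_pairMean {V : Type*} (s : Finset (V × V)) (f : V × V → ℝ) :
    (∑ e ∈ s, f e) = s.card * pairMean s f := by
  rcases s.eq_empty_or_nonempty with h | h
  · simp [h]
  · have hc : (s.card : ℝ) ≠ 0 :=
      Nat.cast_ne_zero.mpr (Finset.card_pos.mpr h).ne'
    rw [pairMean]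
    field_simp

lemma sum_centered {V : Type*} (s : Finset (V × V)) (f g : V × V → ℝ) :
    (∑ e ∈ s, (f e - pairMean s f) * (g e - pairMean s g)) = s.card * pairCov s f g := by
  rcases s.eq_empty_or_nonempty with h | h
  · simp [h]
  · have hc : (s.card : ℝ) ≠ 0 :=
      Nat.cast_ne_zero.mpr (Finset.card_pos.mpr h).ne'
    rw [pairCov]
    field_simp

lemma block_decomp {V : Type*} (s t : Finset (V × V)) (f g : V × V → ℝ) :
    (∑ e ∈ t, (f e - pairMean s f) * (g e - pairMean s g))
      = t.card * pairCov t f g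
        + t.card * (pairMean t f - pairMean s f) * (pairMean t g - pairMean s g) := by
  set X := pairMean s f
  set Y := pairMean s g
  set Xk := pairMean t f
  set Yk := pairMean t g
  have expand : ∀ e ∈ t, (f e - X) * (g e - Y)
      = (f e - Xk) * (g e - Yk) + (Yk - Y) * (f e - Xk) + (Xk - X) * (g e - Yk)
        + (Xk - X) * (Yk - Y) := fun e _ => by ring
  rw [Finset.sum_congr rfl expand]
  have hf : (∑ e ∈ t, (f e - Xk)) = 0 := by
    rw [Finset.sum_sub_distrib, Finset.sum_const, sum_eq_card_mul_pairMean]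
    simp [Xk]
  have hg : (∑ e ∈ t, (g e - Yk)) = 0 := by
    rw [Finset.sum_sub_distrib, Finset.sum_const, sum_eq_card_mul_pairMean]
    simp [Yk]
  rw [Finset.sum_add_distrib, Finset.sum_add_distrib, Finset.sum_add_distrib,
    ← Finset.mul_sum, ← Finset.mul_sum, hf, hg, sum_centered, Finset.sum_const]
  ring

/-- Sufficient conditions for a strictly negative boundary-to-interior assortativity
component (Theorem 6.2): boundary dominance of the means, endpoint mean dominance on
`B→I` arcs, positive endpoint variances, nonpositive within-group covariances and
nonpositive between-group mean term, with at least one strict inequality, imply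
`r_{B→I}(a) < 0`. -/
theorem negative_BI_component
    {V : Type*} [Fintype V] (K : ℕ)
    (Ed : Finset (V × V)) (P : V → Fin K) (a : V → ℝ)
    -- (i) boundary dominance
    (hi : ∀ k, (IntS Ed P k).Nonempty → (BdyS Ed P k).Nonempty →
      nodeMean (IntS Ed P k) a < nodeMean (BdyS Ed P k) a)
    -- (ii) B→I endpoint mean dominance on B→I arcs
    (hii : ∀ k, (EBIk Ed P k).Nonempty →
      nodeMean (BdyS Ed P k) a ≤ pairMean (EBIk Ed P k) (fun e => a e.1) ∧
      pairMean (EBIk Ed P k) (fun e => a e.2) ≤ nodeMean (IntS Ed P k) a)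
    -- (iii) nondegeneracy: positive endpoint variances on the B→I sample
    (hiii₁ : 0 < pairCov (EBI Ed P) (fun e => a e.1) (fun e => a e.1))
    (hiii₂ : 0 < pairCov (EBI Ed P) (fun e => a e.2) (fun e => a e.2))
    -- (iv) within-group nonpositive covariance
    (hiv : ∀ k, (EBIk Ed P k).Nonempty →
      pairCov (EBIk Ed P k) (fun e => a e.1) (fun e => a e.2) ≤ 0)
    -- (v) between-group mean term nonpositive
    (hv : ∑ k, (((EBIk Ed P k).card : ℝ) / (EBI Ed P).card)
        * (pairMean (EBIk Ed P k) (fun e => a e.1) - pairMean (EBI Ed P) (fun e => a e.1))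
        * (pairMean (EBIk Ed P k) (fun e => a e.2) - pairMean (EBI Ed P) (fun e => a e.2))
        ≤ 0)
    -- at least one of (iv), (v) strict
    (hstrict :
      (∃ k, (EBIk Ed P k).Nonempty ∧
        pairCov (EBIk Ed P k) (fun e => a e.1) (fun e => a e.2) < 0) ∨
      ∑ k, (((EBIk Ed P k).card : ℝ) / (EBI Ed P).card)
        * (pairMean (EBIk Ed P k) (fun e => a e.1) - pairMean (EBI Ed P) (fun e => a e.1))
        * (pairMean (EBIk Ed P k) (fun e => a e.2) - pairMean (EBI Ed P) (fun e => a e.2))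
        < 0) :
    pairCorr (EBI Ed P) (fun e => a e.1) (fun e => a e.2) < 0 := by
  clear hi hii
  set S := EBI Ed P with hSdef
  set f : V × V → ℝ := fun e => a e.1
  set g : V × V → ℝ := fun e => a e.2
  have hSne : S.Nonempty := by
    rcases S.eq_empty_or_nonempty with h | h
    · exfalso
      rw [h] at hiii₁
      simp [pairCov] at hiii₁
    · exact h
  have hM : (0 : ℝ) < S.card := by exact_mod_cast Finset.card_pos.mpr hSne
  -- fiber decomposition of the centered sum
  have hfiber : (∑ e ∈ S, (f e - pairMean S f) * (g e - pairMean S g))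
      = ∑ k, ∑ e ∈ EBIk Ed P k, (f e - pairMean S f) * (g e - pairMean S g) := by
    rw [eq_comm]
    simp only [EBIk, ← hSdef, Finset.sum_filter]
    rw [Finset.sum_comm]
    refine Finset.sum_congr rfl fun e _ => ?_
    exact (Finset.sum_eq_single_of_mem (P e.1) (Finset.mem_univ _)
      (fun k _ hk => if_neg (fun h : P e.1 = k => hk h.symm))).trans (if_pos rfl)
  have hdecomp : (∑ e ∈ S, (f e - pairMean S f) * (g e - pairMean S g))
      = (∑ k, ((EBIk Ed P k).card : ℝ) * pairCov (EBIk Ed P k) f g)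
        + ∑ k, ((EBIk Ed P k).card : ℝ)
            * (pairMean (EBIk Ed P k) f - pairMean S f)
            * (pairMean (EBIk Ed P k) g - pairMean S g) := by
    rw [hfiber, ← Finset.sum_add_distrib]
    exact Finset.sum_congr rfl fun k _ => block_decomp S (EBIk Ed P k) f g
  -- first sum nonpositive
  have h1 : (∑ k, ((EBIk Ed P k).card : ℝ) * pairCov (EBIk Ed P k) f g) ≤ 0 := by
    apply Finset.sum_nonpos
    intro k _
    rcases (EBIk Ed P k).eq_empty_or_nonempty with h | h
    · simp [h]
    · exact mul_nonpos_of_nonneg_of_nonpos (by positivity) (hiv k h)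
  -- second sum nonpositive (scale hv by M)
  have hscale : (∑ k, ((EBIk Ed P k).card : ℝ)
            * (pairMean (EBIk Ed P k) f - pairMean S f)
            * (pairMean (EBIk Ed P k) g - pairMean S g))
      = (S.card : ℝ) * ∑ k, (((EBIk Ed P k).card : ℝ) / S.card)
            * (pairMean (EBIk Ed P k) f - pairMean S f)
            * (pairMean (EBIk Ed P k) g - pairMean S g) := by
    rw [Finset.mul_sum]
    refine Finset.sum_congr rfl fun k _ => ?_
    field_simp
  have h2 : (∑ k, ((EBIk Ed P k).card : ℝ)
            * (pairMean (EBIk Ed P k) f - pairMean S f)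
            * (pairMean (EBIk Ed P k) g - pairMean S g)) ≤ 0 := by
    rw [hscale]
    exact mul_nonpos_of_nonneg_of_nonpos hM.le hv
  -- strictness
  have hnum : (∑ e ∈ S, (f e - pairMean S f) * (g e - pairMean S g)) < 0 := by
    rw [hdecomp]
    rcases hstrict with ⟨k, hk, hklt⟩ | hlt
    · have h1' : (∑ k, ((EBIk Ed P k).card : ℝ) * pairCov (EBIk Ed P k) f g) < 0 := by
        apply Finset.sum_neg' ?_ ⟨k, Finset.mem_univ k, ?_⟩
        · intro j _
          rcases (EBIk Ed P j).eq_empty_or_nonempty with h | h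
          · simp [h]
          · exact mul_nonpos_of_nonneg_of_nonpos (by positivity) (hiv j h)
        · have : (0 : ℝ) < (EBIk Ed P k).card := by
            exact_mod_cast Finset.card_pos.mpr hk
          exact mul_neg_of_pos_of_neg this hklt
      linarith
    · have h2' : (∑ k, ((EBIk Ed P k).card : ℝ)
            * (pairMean (EBIk Ed P k) f - pairMean S f)
            * (pairMean (EBIk Ed P k) g - pairMean S g)) < 0 := by
        rw [hscale]
        exact mul_neg_of_pos_of_neg hM hlt
      linarith
  have hcov : pairCov S f g < 0 := by
    rw [pairCov]
    exact div_neg_of_neg_of_pos hnum hM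
  rw [pairCorr]
  exact div_neg_of_neg_of_pos hcov
    (mul_pos (Real.sqrt_pos.mpr hiii₁) (Real.sqrt_pos.mpr hiii₂))
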